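/- arXiv:1304.3295 — 3 statements merged into one kernel-verified Lean document; each statement's English description precedes it below -/
import Mathlib

section
/- For every real number a > 0 and all integers m, n ≥ 0, the Charlier polynomials satisfy the orthogonality relation Σ_{x=0}^{∞} (a^x/x!)·C_m(x; a)·C_n(x; a) = a^{−n}·e^{a}·n!·δ_{mn}, where the series converges absolutely and δ_{mn} is the Kronecker delta. -/
/-- The Charlier polynomial `C_n(x; a) = ₂F₀(-n, -x; —; -1/a)
  = ∑_{k=0}^{n} (n choose k)·x(x-1)⋯(x-k+1)·(-1/a)^k`,
  regarded as a polynomial function of a real variable `x`. -/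
noncomputable def charlier (a : ℝ) (n : ℕ) (x : ℝ) : ℝ :=
  ∑ k ∈ Finset.range (n + 1),
    (n.choose k : ℝ) * (∏ j ∈ Finset.range k, (x - (j : ℝ))) * (-1 / a) ^ k


open Finset

lemma prod_range_cast_descFactorial (x k : ℕ) :
    (∏ j ∈ Finset.range k, ((x : ℝ) - (j : ℝ))) = (x.descFactorial k : ℝ) := by
  induction k with
  | zero => simp
  | succ k ih =>
    rw [Finset.prod_range_succ, ih, Nat.descFactorial_succ]
    rcases le_or_gt k x with h | h
    · push_cast [h]; ring
    · rw [Nat.descFactorial_of_lt h]; simp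


lemma charlier_natCast (a : ℝ) (n x : ℕ) :
    charlier a n (x : ℝ) = ∑ k ∈ Finset.range (n + 1),
      (n.choose k : ℝ) * (x.descFactorial k : ℝ) * (-1 / a) ^ k := by
  unfold charlier
  exact Finset.sum_congr rfl fun k _ => by rw [prod_range_cast_descFactorial]

lemma hasSum_exp' (a : ℝ) : HasSum (fun n : ℕ => a ^ n / (n.factorial : ℝ)) (Real.exp a) := by
  have h := (Real.summable_pow_div_factorial a).hasSum
  rwa [show ∑' n : ℕ, a ^ n / (n.factorial : ℝ) = Real.exp a from by
    rw [Real.exp_eq_exp_ℝ, NormedSpace.exp_eq_tsum_div]] at h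

lemma hasSum_descFactorial (a : ℝ) (k : ℕ) :
    HasSum (fun x : ℕ => a ^ x / (x.factorial : ℝ) * (x.descFactorial k : ℝ))
      (a ^ k * Real.exp a) := by
  set f : ℕ → ℝ := fun x => a ^ x / (x.factorial : ℝ) * (x.descFactorial k : ℝ) with hf
  have h0 : ∀ y : ℕ, f (y + k) = a ^ k * (a ^ y / (y.factorial : ℝ)) := by
    intro y
    have hd : ((y.factorial : ℝ)) * (((y + k).descFactorial k : ℝ)) = ((y + k).factorial : ℝ) := by
      have := Nat.factorial_mul_descFactorial (Nat.le_add_left k y)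
      rw [Nat.add_sub_cancel] at this
      exact_mod_cast this
    have h1 : ((y + k).factorial : ℝ) ≠ 0 := Nat.cast_ne_zero.2 (Nat.factorial_ne_zero _)
    have h2 : ((y.factorial : ℝ)) ≠ 0 := Nat.cast_ne_zero.2 (Nat.factorial_ne_zero _)
    rw [hf]
    field_simp
    rw [pow_add]
    linear_combination (a ^ y * a ^ k) * hd
  have h3 : HasSum (fun y : ℕ => f (y + k)) (a ^ k * Real.exp a) := by
    rw [funext h0]; exact (hasSum_exp' a).mul_left _
  have h4 := (hasSum_nat_add_iff (f := f) k).mp h3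
  have hz : ∑ i ∈ Finset.range k, f i = 0 :=
    Finset.sum_eq_zero fun i hi => by
      rw [hf]; simp [Nat.descFactorial_of_lt (Finset.mem_range.1 hi)]
  rwa [hz, add_zero] at h4

lemma alt_choose_sum (n : ℕ) :
    ∑ k ∈ Finset.range (n + 1), (n.choose k : ℝ) * (-1) ^ k
      = (if n = 0 then 1 else 0) := by
  have h := Int.alternating_sum_range_choose (n := n)
  have : ((∑ i ∈ Finset.range (n + 1), (-1 : ℤ) ^ i * n.choose i : ℤ) : ℝ)
      = ∑ k ∈ Finset.range (n + 1), (n.choose k : ℝ) * (-1) ^ k := by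
    push_cast; exact Finset.sum_congr rfl fun k _ => by ring
  rw [← this, h]
  split <;> simp

lemma prod_diff (x : ℝ) (k : ℕ) :
    (∏ j ∈ Finset.range (k + 1), (x + 1 - (j : ℝ)))
      = (∏ j ∈ Finset.range (k + 1), (x - (j : ℝ))) + (k + 1) * ∏ j ∈ Finset.range k, (x - (j : ℝ)) := by
  have h1 : (∏ j ∈ Finset.range (k + 1), (x + 1 - (j : ℝ)))
      = (x + 1) * ∏ j ∈ Finset.range k, (x - (j : ℝ)) := by
    rw [Finset.prod_range_succ']
    rw [Finset.prod_congr rfl (fun j _ => show x + 1 - ((j : ℕ) + 1 : ℕ) = x - j by push_cast; ring)]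
    push_cast; ring
  rw [h1, Finset.prod_range_succ]
  ring

lemma charlier_rec (a : ℝ) (n : ℕ) (x : ℝ) :
    charlier a (n + 1) (x + 1) = charlier a (n + 1) x - ((n + 1 : ℝ) / a) * charlier a n x := by
  have L : charlier a (n + 1) (x + 1) - charlier a (n + 1) x
      = ∑ k ∈ Finset.range (n + 2), ((n + 1).choose k : ℝ) *
          ((∏ j ∈ Finset.range k, (x + 1 - (j : ℝ))) - ∏ j ∈ Finset.range k, (x - (j : ℝ))) *
          (-1 / a) ^ k := by
    unfold charlier
    rw [← Finset.sum_sub_distrib]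
    exact Finset.sum_congr rfl fun k _ => by ring
  have key : ∑ k ∈ Finset.range (n + 2), ((n + 1).choose k : ℝ) *
        ((∏ j ∈ Finset.range k, (x + 1 - (j : ℝ))) - ∏ j ∈ Finset.range k, (x - (j : ℝ))) *
        (-1 / a) ^ k
      = -(((n : ℝ) + 1) / a) * charlier a n x := by
    rw [Finset.sum_range_succ']
    simp only [Finset.range_zero, Finset.prod_empty, sub_self, mul_zero, zero_mul, pow_zero,
      mul_one, add_zero]
    unfold charlier
    rw [Finset.mul_sum]
    refine Finset.sum_congr rfl fun k _ => ?_
    have hc : ((n : ℝ) + 1) * (n.choose k : ℝ) = (((n + 1).choose (k + 1) : ℝ)) * ((k : ℝ) + 1) := by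
      exact_mod_cast congrArg (Nat.cast : ℕ → ℝ) (Nat.add_one_mul_choose_eq n k)
    rw [prod_diff, pow_succ]
    linear_combination ((∏ j ∈ Finset.range k, (x - (j : ℝ))) * (-1 / a) ^ k / a) * hc
  linarith [L, key]

lemma descFactorial_succ_succ (j n : ℕ) :
    (j + 1).descFactorial (n + 1) = j.descFactorial (n + 1) + (n + 1) * j.descFactorial n := by
  rw [Nat.succ_descFactorial_succ, Nat.descFactorial_succ]
  rcases Nat.lt_or_ge j n with h | h
  · simp [Nat.descFactorial_of_lt h]
  · rw [← Nat.add_mul]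
    congr 1
    omega

lemma hasSum_charlier (a : ℝ) (ha : a ≠ 0) (n : ℕ) :
    HasSum (fun y : ℕ => a ^ y / (y.factorial : ℝ) * charlier a n (y : ℝ))
      (Real.exp a * (if n = 0 then 1 else 0)) := by
  have hfun : (fun y : ℕ => a ^ y / (y.factorial : ℝ) * charlier a n (y : ℝ))
      = fun y : ℕ => ∑ k ∈ Finset.range (n + 1),
          ((n.choose k : ℝ) * (-1 / a) ^ k) * (a ^ y / (y.factorial : ℝ) * (y.descFactorial k : ℝ)) := by
    funext y
    rw [charlier_natCast, Finset.mul_sum]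
    exact Finset.sum_congr rfl fun k _ => by ring
  rw [hfun]
  have hs := hasSum_sum (f := fun (k : ℕ) (y : ℕ) =>
      ((n.choose k : ℝ) * (-1 / a) ^ k) * (a ^ y / (y.factorial : ℝ) * (y.descFactorial k : ℝ)))
    (s := Finset.range (n + 1))
    (a := fun k => ((n.choose k : ℝ) * (-1 / a) ^ k) * (a ^ k * Real.exp a))
    (fun k _ => (hasSum_descFactorial a k).mul_left _)
  convert hs using 1
  rw [← alt_choose_sum n, Finset.mul_sum]
  refine Finset.sum_congr rfl fun k _ => ?_
  have : (-1 / a) ^ k * a ^ k = (-1 : ℝ) ^ k := by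
    rw [← mul_pow]; congr 1; field_simp
  calc Real.exp a * ((n.choose k : ℝ) * (-1) ^ k)
      = Real.exp a * ((n.choose k : ℝ) * ((-1 / a) ^ k * a ^ k)) := by rw [this]
    _ = (n.choose k : ℝ) * (-1 / a) ^ k * (a ^ k * Real.exp a) := by ring

lemma hasSum_charlier_shift (a : ℝ) (ha : a ≠ 0) (j : ℕ) : ∀ n : ℕ,
    HasSum (fun y : ℕ => a ^ y / (y.factorial : ℝ) * charlier a n ((y + j : ℕ) : ℝ))
      (Real.exp a * (-1 / a) ^ n * (j.descFactorial n : ℝ)) := by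
  induction j with
  | zero =>
    intro n
    have h := hasSum_charlier a ha n
    have hv : Real.exp a * (-1 / a) ^ n * ((Nat.descFactorial 0 n : ℕ) : ℝ)
        = Real.exp a * (if n = 0 then 1 else 0) := by
      cases n <;> simp
    rw [hv]
    simpa using h
  | succ j ih =>
    intro n
    cases n with
    | zero =>
      have : (fun y : ℕ => a ^ y / (y.factorial : ℝ) * charlier a 0 ((y + (j+1) : ℕ) : ℝ))
          = fun y : ℕ => a ^ y / (y.factorial : ℝ) := by
        funext y; simp [charlier]
      rw [this]
      simpa using hasSum_exp' a
    | succ n =>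
      have h1 := ih (n + 1)
      have h2 := (ih n).mul_left (((n : ℝ) + 1) / a)
      have h := h1.sub h2
      have hfun : (fun y : ℕ => a ^ y / (y.factorial : ℝ) * charlier a (n+1) ((y + (j+1) : ℕ) : ℝ))
          = fun y : ℕ => a ^ y / (y.factorial : ℝ) * charlier a (n+1) ((y + j : ℕ) : ℝ)
            - ((n : ℝ) + 1) / a * (a ^ y / (y.factorial : ℝ) * charlier a n ((y + j : ℕ) : ℝ)) := by
        funext y
        have hx : ((y + (j + 1) : ℕ) : ℝ) = ((y + j : ℕ) : ℝ) + 1 := by push_cast; ring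
        rw [hx, charlier_rec a n ((y + j : ℕ) : ℝ)]
        push_cast
        ring
      rw [hfun]
      convert h using 1
      · rfl
      have hd : ((j + 1).descFactorial (n + 1) : ℝ)
          = (j.descFactorial (n + 1) : ℝ) + ((n : ℝ) + 1) * (j.descFactorial n : ℝ) := by
        exact_mod_cast congrArg (Nat.cast : ℕ → ℝ) (descFactorial_succ_succ j n)
      rw [hd, pow_succ]
      ring

lemma hasSum_desc_charlier (a : ℝ) (ha : a ≠ 0) (j n : ℕ) :
    HasSum (fun x : ℕ => a ^ x / (x.factorial : ℝ) * (x.descFactorial j : ℝ) * charlier a n (x : ℝ))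
      (a ^ j * (Real.exp a * (-1 / a) ^ n * (j.descFactorial n : ℝ))) := by
  set f : ℕ → ℝ := fun x =>
    a ^ x / (x.factorial : ℝ) * (x.descFactorial j : ℝ) * charlier a n (x : ℝ) with hf
  have h0 : ∀ y : ℕ, f (y + j)
      = a ^ j * (a ^ y / (y.factorial : ℝ) * charlier a n ((y + j : ℕ) : ℝ)) := by
    intro y
    have hd : ((y.factorial : ℝ)) * (((y + j).descFactorial j : ℝ)) = ((y + j).factorial : ℝ) := by
      have := Nat.factorial_mul_descFactorial (Nat.le_add_left j y)
      rw [Nat.add_sub_cancel] at this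
      exact_mod_cast this
    have h1 : ((y + j).factorial : ℝ) ≠ 0 := Nat.cast_ne_zero.2 (Nat.factorial_ne_zero _)
    have h2 : ((y.factorial : ℝ)) ≠ 0 := Nat.cast_ne_zero.2 (Nat.factorial_ne_zero _)
    rw [hf]
    simp only
    push_cast
    field_simp
    rw [pow_add]
    linear_combination (a ^ y * a ^ j * charlier a n ((y : ℝ) + (j : ℝ))) * hd
  have h3 : HasSum (fun y : ℕ => f (y + j))
      (a ^ j * (Real.exp a * (-1 / a) ^ n * (j.descFactorial n : ℝ))) := by
    rw [funext h0]
    exact (hasSum_charlier_shift a ha j n).mul_left _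
  have h4 := (hasSum_nat_add_iff (f := f) j).mp h3
  have hz : ∑ i ∈ Finset.range j, f i = 0 :=
    Finset.sum_eq_zero fun i hi => by
      rw [hf]; simp [Nat.descFactorial_of_lt (Finset.mem_range.1 hi)]
  rwa [hz, add_zero] at h4

lemma alt_sum_choose_descFactorial (m n : ℕ) :
    ∑ j ∈ Finset.range (m + 1), (-1 : ℤ) ^ j * (m.choose j) * (j.descFactorial n)
      = (-1) ^ n * n.factorial * (if m = n then 1 else 0) := by
  rcases Nat.lt_or_ge m n with h | h
  · rw [if_neg (by omega)]
    rw [Finset.sum_eq_zero, mul_zero]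
    intro j hj
    have : j < n := lt_of_lt_of_le (Finset.mem_range.1 hj) h
    rw [Nat.descFactorial_of_lt this]
    simp
  · have hm : m + 1 = n + (m - n + 1) := by omega
    rw [hm, Finset.sum_range_add]
    have hz : ∑ j ∈ Finset.range n, (-1 : ℤ) ^ j * (m.choose j) * (j.descFactorial n) = 0 := by
      refine Finset.sum_eq_zero fun j hj => ?_
      rw [Nat.descFactorial_of_lt (Finset.mem_range.1 hj)]
      simp
    rw [hz, zero_add]
    have hterm : ∀ i ∈ Finset.range (m - n + 1),
        (-1 : ℤ) ^ (n + i) * (m.choose (n + i)) * ((n + i).descFactorial n)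
          = ((-1) ^ n * n.factorial * (m.choose n)) * ((-1) ^ i * ((m - n).choose i)) := by
      intro i hi
      have hi' : i ≤ m - n := by exact_mod_cast Nat.lt_succ_iff.1 (Finset.mem_range.1 hi)
      have h1 : n + i ≤ m := by omega
      have h2 : n ≤ n + i := Nat.le_add_right n i
      have hcc : m.choose (n + i) * (n + i).choose n = m.choose n * (m - n).choose i := by
        have := Nat.choose_mul (n := m) (k := n + i) (s := n) h2
        simpa [Nat.add_sub_cancel_left] using this
      have hdf : (n + i).descFactorial n = n.factorial * (n + i).choose n :=
        Nat.descFactorial_eq_factorial_mul_choose _ _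
      rw [hdf, pow_add]
      push_cast
      have hcc' : (m.choose (n + i) : ℤ) * ((n + i).choose n : ℤ)
          = (m.choose n : ℤ) * ((m - n).choose i : ℤ) := by exact_mod_cast hcc
      linear_combination ((-1 : ℤ) ^ n * (-1) ^ i * n.factorial) * hcc'
    rw [Finset.sum_congr rfl hterm, ← Finset.mul_sum]
    have := Int.alternating_sum_range_choose (n := m - n)
    rw [Finset.sum_congr rfl (fun i _ => by ring : ∀ i ∈ Finset.range (m - n + 1),
        (-1 : ℤ) ^ i * ((m - n).choose i : ℤ) = ((m - n).choose i : ℤ) * (-1) ^ i)] at this ⊢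
    rw [this]
    have : (m = n) ↔ (m - n = 0) := by omega
    by_cases hmn : m = n
    · rw [if_pos hmn, if_pos (by omega)]
      subst hmn
      simp
    · rw [if_neg hmn, if_neg (by omega)]
      ring

lemma choose_le_two_pow' (x k : ℕ) : x.choose k ≤ 2 ^ x := by
  rcases le_or_gt k x with h | h
  · calc x.choose k ≤ ∑ i ∈ Finset.range (x + 1), x.choose i :=
        Finset.single_le_sum (fun i _ => Nat.zero_le _) (Finset.mem_range.2 (by omega))
      _ = 2 ^ x := Nat.sum_range_choose x
  · rw [Nat.choose_eq_zero_of_lt h]; exact Nat.zero_le _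

lemma charlier_bound (a : ℝ) (ha : 0 < a) (n : ℕ) (x : ℕ) :
    |charlier a n (x : ℝ)| ≤
      (∑ k ∈ Finset.range (n + 1), (n.choose k : ℝ) * (k.factorial : ℝ) * (max 1 (1/a)) ^ k)
        * 2 ^ x := by
  rw [charlier_natCast, Finset.sum_mul]
  refine (Finset.abs_sum_le_sum_abs _ _).trans (Finset.sum_le_sum fun k _ => ?_)
  rw [abs_mul, abs_mul]
  have h1 : |((n.choose k : ℝ))| = (n.choose k : ℝ) := abs_of_nonneg (by positivity)
  have h2 : |((x.descFactorial k : ℝ))| = (x.descFactorial k : ℝ) := abs_of_nonneg (by positivity)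
  have h3 : |(-1 / a) ^ k| = (1 / a) ^ k := by
    rw [abs_pow, abs_div, abs_neg, abs_one, abs_of_pos ha]
  rw [h1, h2, h3]
  have hd : (x.descFactorial k : ℝ) ≤ (k.factorial : ℝ) * 2 ^ x := by
    rw [Nat.descFactorial_eq_factorial_mul_choose]
    push_cast
    have := choose_le_two_pow' x k
    have : (x.choose k : ℝ) ≤ 2 ^ x := by exact_mod_cast this
    have hf : (0:ℝ) < (k.factorial : ℝ) := by exact_mod_cast Nat.factorial_pos k
    nlinarith
  have hm : (1 / a) ^ k ≤ (max 1 (1/a)) ^ k :=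
    pow_le_pow_left₀ (by positivity) (le_max_right _ _) k
  calc (n.choose k : ℝ) * (x.descFactorial k : ℝ) * (1 / a) ^ k
      ≤ (n.choose k : ℝ) * ((k.factorial : ℝ) * 2 ^ x) * (max 1 (1/a)) ^ k := by
        apply mul_le_mul
        · exact mul_le_mul_of_nonneg_left hd (by positivity)
        · exact hm
        · positivity
        · positivity
    _ = (n.choose k : ℝ) * (k.factorial : ℝ) * (max 1 (1/a)) ^ k * 2 ^ x := by ring

lemma hasSum_main (a : ℝ) (ha : a ≠ 0) (m n : ℕ) :
    HasSum (fun x : ℕ => a ^ x / (x.factorial : ℝ) * charlier a m (x : ℝ) * charlier a n (x : ℝ))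
      (∑ j ∈ Finset.range (m + 1), ((m.choose j : ℝ) * (-1 / a) ^ j) *
        (a ^ j * (Real.exp a * (-1 / a) ^ n * (j.descFactorial n : ℝ)))) := by
  have hs := hasSum_sum (f := fun (j : ℕ) (x : ℕ) =>
      ((m.choose j : ℝ) * (-1 / a) ^ j) *
        (a ^ x / (x.factorial : ℝ) * (x.descFactorial j : ℝ) * charlier a n (x : ℝ)))
    (s := Finset.range (m + 1))
    (a := fun j => ((m.choose j : ℝ) * (-1 / a) ^ j) *
      (a ^ j * (Real.exp a * (-1 / a) ^ n * (j.descFactorial n : ℝ))))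
    (fun j _ => (hasSum_desc_charlier a ha j n).mul_left _)
  have hfun : (fun x : ℕ => a ^ x / (x.factorial : ℝ) * charlier a m (x : ℝ) * charlier a n (x : ℝ))
      = fun x : ℕ => ∑ j ∈ Finset.range (m + 1),
          ((m.choose j : ℝ) * (-1 / a) ^ j) *
            (a ^ x / (x.factorial : ℝ) * (x.descFactorial j : ℝ) * charlier a n (x : ℝ)) := by
    funext x
    rw [charlier_natCast a m x, Finset.mul_sum, Finset.sum_mul]
    exact Finset.sum_congr rfl fun j _ => by ring
  rw [hfun]
  exact hs

/-- Orthogonality of Charlier polynomials: for `a > 0`,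
`∑_{x=0}^{∞} (a^x/x!)·C_m(x; a)·C_n(x; a) = a^{-n}·e^a·n!·δ_{mn}`,
the series converging absolutely. -/
theorem charlier_orthogonality (a : ℝ) (ha : 0 < a) (m n : ℕ) :
    Summable (fun x : ℕ =>
      |a ^ x / (x.factorial : ℝ) * charlier a m (x : ℝ) * charlier a n (x : ℝ)|) ∧
    ∑' x : ℕ, a ^ x / (x.factorial : ℝ) * charlier a m (x : ℝ) * charlier a n (x : ℝ) =
      a ^ (-(n : ℤ)) * Real.exp a * (n.factorial : ℝ) * (if m = n then 1 else 0) := by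
  have ha' : a ≠ 0 := ne_of_gt ha
  set Km : ℝ := ∑ k ∈ Finset.range (m + 1), (m.choose k : ℝ) * (k.factorial : ℝ) * (max 1 (1/a)) ^ k with hKm
  set Kn : ℝ := ∑ k ∈ Finset.range (n + 1), (n.choose k : ℝ) * (k.factorial : ℝ) * (max 1 (1/a)) ^ k with hKn
  have hKm0 : 0 ≤ Km := Finset.sum_nonneg fun k _ => by positivity
  have hKn0 : 0 ≤ Kn := Finset.sum_nonneg fun k _ => by positivity
  constructor
  · refine Summable.of_nonneg_of_le (fun x => abs_nonneg _)
      (f := fun x : ℕ => Km * Kn * ((4 * a) ^ x / (x.factorial : ℝ))) (fun x => ?_)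
      ((Real.summable_pow_div_factorial (4 * a)).mul_left _)
    have hnn : (0:ℝ) ≤ a ^ x / (x.factorial : ℝ) := by positivity
    rw [abs_mul, abs_mul, abs_of_nonneg hnn]
    have hbm := charlier_bound a ha m x
    have hbn := charlier_bound a ha n x
    calc a ^ x / (x.factorial : ℝ) * |charlier a m (x : ℝ)| * |charlier a n (x : ℝ)|
        ≤ a ^ x / (x.factorial : ℝ) * (Km * 2 ^ x) * (Kn * 2 ^ x) := by
          apply mul_le_mul
          · exact mul_le_mul_of_nonneg_left hbm hnn
          · exact hbn
          · exact abs_nonneg _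
          · positivity
      _ = Km * Kn * ((4 * a) ^ x / (x.factorial : ℝ)) := by
          rw [mul_pow]
          have : (4:ℝ) ^ x = 2 ^ x * 2 ^ x := by
            rw [← pow_add, show (4:ℝ) = 2 ^ 2 by norm_num, ← pow_mul]
            ring_nf
          rw [this]
          ring
  · have hkey := hasSum_main a ha' m n
    rw [hkey.tsum_eq]
    have hterm : ∀ j ∈ Finset.range (m + 1),
        ((m.choose j : ℝ) * (-1 / a) ^ j) *
          (a ^ j * (Real.exp a * (-1 / a) ^ n * (j.descFactorial n : ℝ)))
        = (Real.exp a * (-1 / a) ^ n) *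
            ((m.choose j : ℝ) * (-1) ^ j * (j.descFactorial n : ℝ)) := by
      intro j _
      have h1 : (-1 / a) ^ j * a ^ j = (-1 : ℝ) ^ j := by
        rw [← mul_pow]; congr 1; field_simp
      calc ((m.choose j : ℝ) * (-1 / a) ^ j) *
            (a ^ j * (Real.exp a * (-1 / a) ^ n * (j.descFactorial n : ℝ)))
          = ((-1 / a) ^ j * a ^ j) * ((m.choose j : ℝ) *
              (Real.exp a * (-1 / a) ^ n * (j.descFactorial n : ℝ))) := by ring
        _ = (Real.exp a * (-1 / a) ^ n) *
              ((m.choose j : ℝ) * (-1) ^ j * (j.descFactorial n : ℝ)) := by rw [h1]; ring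
    rw [Finset.sum_congr rfl hterm, ← Finset.mul_sum]
    have hsum : ∑ j ∈ Finset.range (m + 1), (m.choose j : ℝ) * (-1) ^ j * (j.descFactorial n : ℝ)
        = (-1) ^ n * (n.factorial : ℝ) * (if m = n then 1 else 0) := by
      have h := alt_sum_choose_descFactorial m n
      have h2 : ((∑ j ∈ Finset.range (m + 1),
          (-1 : ℤ) ^ j * (m.choose j) * (j.descFactorial n) : ℤ) : ℝ)
          = ∑ j ∈ Finset.range (m + 1), (m.choose j : ℝ) * (-1) ^ j * (j.descFactorial n : ℝ) := by
        push_cast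
        exact Finset.sum_congr rfl fun j _ => by ring
      rw [← h2, h]
      push_cast
      split <;> simp
    rw [hsum]
    have hz : (a : ℝ) ^ (-(n : ℤ)) = (1 / a) ^ n := by
      rw [zpow_neg, zpow_natCast, one_div, inv_pow]
    rw [hz]
    have h3 : (-1 / a : ℝ) ^ n * (-1) ^ n = (1 / a) ^ n := by
      rw [← mul_pow]; congr 1; field_simp
    calc Real.exp a * (-1 / a) ^ n *
          ((-1) ^ n * (n.factorial : ℝ) * (if m = n then 1 else 0))
        = ((-1 / a) ^ n * (-1) ^ n) * (Real.exp a * (n.factorial : ℝ) * (if m = n then 1 else 0)) := by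
          ring
      _ = (1 / a) ^ n * Real.exp a * (n.factorial : ℝ) * (if m = n then 1 else 0) := by
          rw [h3]; ring
end

section
/- Let γ be a nonzero real number, let c : ℕ → ℝ be given by c_{2m} = γ, c_{2m+1} = √(m+1), and let p_n : ℝ → ℝ be defined by p_{2n}(x) = ((−γ)^n/√(n!))·C_n(x²; γ²) and p_{2n+1}(x) = −((−γ)^{n−1}/√(n!))·x·C_n(x²−1; γ²). For a real number y, define the complex sequence u(y) : ℕ → ℂ by u(y)_n = i^n·p_n(y). Then u(y) is a formal eigenvector of the momentum operator p̂ with eigenvalue y: for all n ≥ 0, i·c_{n−1}·u(y)_{n−1} − i·c_n·u(y)_{n+1} = y·u(y)_n, where the term with index −1 is omitted. -/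
lemma charlier_zero' (a x : ℝ) : charlier a 0 x = 1 := by simp [charlier]

lemma prod_shift' (x : ℝ) (k : ℕ) :
    (∏ j ∈ Finset.range (k+1), (x - (j:ℝ))) = x * ∏ j ∈ Finset.range k, (x - 1 - (j:ℝ)) := by
  rw [Finset.prod_range_succ']
  simp only [Nat.cast_zero, sub_zero, Nat.cast_add, Nat.cast_one]
  rw [mul_comm]
  exact congrArg _ (Finset.prod_congr rfl fun j _ => by ring)

lemma charlier_ext' (a : ℝ) (n : ℕ) (x : ℝ) :
    charlier a n x = ∑ k ∈ Finset.range (n + 2),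
      (n.choose k : ℝ) * (∏ j ∈ Finset.range k, (x - (j : ℝ))) * (-1 / a) ^ k := by
  rw [charlier, Finset.sum_range_succ _ (n+1)]
  simp

/-- Forward shift relation for Charlier polynomials. -/
lemma charlier_fwd' (a : ℝ) (ha : a ≠ 0) (n : ℕ) (x : ℝ) :
    a * (charlier a (n+1) x - charlier a n x) = -x * charlier a n (x - 1) := by
  have hc : a * (-1/a) = -1 := by field_simp
  rw [charlier_ext' a n x]
  rw [show charlier a (n+1) x = ∑ k ∈ Finset.range (n + 2),
      ((n+1).choose k : ℝ) * (∏ j ∈ Finset.range k, (x - (j : ℝ))) * (-1 / a) ^ k from rfl]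
  rw [← Finset.sum_sub_distrib, Finset.mul_sum]
  rw [Finset.sum_range_succ']
  rw [charlier, Finset.mul_sum]
  simp only [Nat.choose_zero_right, Nat.cast_one, Finset.range_zero, Finset.prod_empty,
    pow_zero, mul_one, one_mul, sub_self, mul_zero, add_zero]
  refine Finset.sum_congr rfl fun j _ => ?_
  have hb : (((n+1).choose (j+1) : ℕ) : ℝ) = (n.choose j : ℝ) + (n.choose (j+1) : ℝ) := by
    rw [Nat.choose_succ_succ]; push_cast; ring
  rw [hb, prod_shift', pow_succ]
  linear_combination ((-1/a)^j * x * (∏ i ∈ Finset.range j, (x - 1 - (i:ℝ))) * (n.choose j : ℝ)) * hc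

/-- Backward shift relation for Charlier polynomials. -/
lemma charlier_bwd' (a : ℝ) (ha : a ≠ 0) (n : ℕ) (x : ℝ) :
    a * (charlier a (n+1) x - charlier a (n+1) (x-1)) = -((n:ℝ)+1) * charlier a n (x-1) := by
  have hc : a * (-1/a) = -1 := by field_simp
  rw [show charlier a (n+1) x = ∑ k ∈ Finset.range (n + 2),
      ((n+1).choose k : ℝ) * (∏ j ∈ Finset.range k, (x - (j : ℝ))) * (-1 / a) ^ k from rfl]
  rw [show charlier a (n+1) (x-1) = ∑ k ∈ Finset.range (n + 2),
      ((n+1).choose k : ℝ) * (∏ j ∈ Finset.range k, (x - 1 - (j : ℝ))) * (-1 / a) ^ k from rfl]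
  rw [← Finset.sum_sub_distrib, Finset.mul_sum]
  rw [Finset.sum_range_succ']
  rw [charlier, Finset.mul_sum]
  simp only [Nat.choose_zero_right, Nat.cast_one, Finset.range_zero, Finset.prod_empty,
    pow_zero, mul_one, one_mul, sub_self, mul_zero, add_zero]
  refine Finset.sum_congr rfl fun j _ => ?_
  have hb : (((n+1).choose (j+1)) : ℝ) * ((j:ℝ)+1) = ((n:ℝ)+1) * (n.choose j : ℝ) := by
    have h := Nat.add_one_mul_choose_eq n j
    have h2 : ((n+1) * n.choose j : ℕ) = ((n+1).choose (j+1) * (j+1) : ℕ) := by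
      simpa [Nat.succ_eq_add_one] using h
    have h3 := congrArg (Nat.cast (R := ℝ)) h2
    push_cast at h3
    linarith
  rw [prod_shift', Finset.prod_range_succ, pow_succ]
  linear_combination (((-1)/a)^j * (((n+1).choose (j+1):ℝ)) *
      (∏ i ∈ Finset.range j, (x - 1 - (i:ℝ))) * ((j:ℝ)+1)) * hc
    - (((-1)/a)^j * (∏ i ∈ Finset.range j, (x - 1 - (i:ℝ)))) * hb

/-- The sequence `u(y)_n = i^n·p_n(y)` is a formal eigenvector of the momentum operator
`(p̂f)(n) = i·c_{n-1}·f(n-1) - i·c_n·f(n+1)` with eigenvalue `y`: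
`i·c_{n-1}·u(y)_{n-1} - i·c_n·u(y)_{n+1} = y·u(y)_n` for all `n ≥ 0`
(the term with index `-1` being omitted). -/
theorem momentum_eigenvector (γ : ℝ) (hγ : γ ≠ 0) (c : ℕ → ℝ)
    (hc0 : ∀ m : ℕ, c (2 * m) = γ)
    (hc1 : ∀ m : ℕ, c (2 * m + 1) = Real.sqrt ((m : ℝ) + 1))
    (p : ℕ → ℝ → ℝ)
    (hpeven : ∀ (n : ℕ) (x : ℝ),
      p (2 * n) x = ((-γ) ^ n / Real.sqrt (n.factorial : ℝ)) * charlier (γ ^ 2) n (x ^ 2))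
    (hpodd : ∀ (n : ℕ) (x : ℝ),
      p (2 * n + 1) x =
        -(((-γ) ^ ((n : ℤ) - 1) / Real.sqrt (n.factorial : ℝ)) * x *
          charlier (γ ^ 2) n (x ^ 2 - 1)))
    (y : ℝ) (u : ℕ → ℂ)
    (hu : ∀ n : ℕ, u n = Complex.I ^ n * (p n y : ℂ)) :
    ∀ n : ℕ,
      (if n = 0 then 0 else Complex.I * (c (n - 1) : ℂ) * u (n - 1)) -
        Complex.I * (c n : ℂ) * u (n + 1) = (y : ℂ) * u n := by
  have ha : (γ^2 : ℝ) ≠ 0 := pow_ne_zero _ hγ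
  -- the real recurrences
  have Reven : ∀ m : ℕ,
      γ * p (2*m) y + Real.sqrt ((m:ℝ)+1) * p (2*m+2) y = y * p (2*m+1) y := by
    intro m
    rw [hpeven m y, hpodd m y, show 2*m+2 = 2*(m+1) from by ring, hpeven (m+1) y]
    have key := charlier_fwd' (γ^2) ha m (y^2)
    have hz : (-γ) ^ ((m : ℤ) - 1) = (-γ)^m / (-γ) := by
      rw [zpow_sub₀ (neg_ne_zero.2 hγ), zpow_natCast, zpow_one]
    have hfacpos : (0:ℝ) < (m.factorial : ℝ) := by exact_mod_cast m.factorial_pos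
    have hS : Real.sqrt (m.factorial : ℝ) ≠ 0 := by positivity
    have hT : Real.sqrt ((m:ℝ)+1) ≠ 0 := by positivity
    have hfac : Real.sqrt (((m+1).factorial : ℝ))
        = Real.sqrt ((m:ℝ)+1) * Real.sqrt (m.factorial : ℝ) := by
      rw [Nat.factorial_succ]
      push_cast
      rw [Real.sqrt_mul (by positivity)]
    rw [hz, hfac]
    field_simp
    linear_combination (-((-γ)^m)) * key
  have Rodd : ∀ m : ℕ,
      Real.sqrt ((m:ℝ)+1) * p (2*m+1) y + γ * p (2*m+3) y = y * p (2*m+2) y := by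
    intro m
    rw [hpodd m y, show 2*m+3 = 2*(m+1)+1 from by ring, hpodd (m+1) y,
      show 2*m+2 = 2*(m+1) from by ring, hpeven (m+1) y]
    have key := charlier_bwd' (γ^2) ha m (y^2)
    have hz : (-γ) ^ ((m : ℤ) - 1) = (-γ)^m / (-γ) := by
      rw [zpow_sub₀ (neg_ne_zero.2 hγ), zpow_natCast, zpow_one]
    have hz2 : (-γ) ^ (((m+1 : ℕ) : ℤ) - 1) = (-γ)^m := by
      rw [show ((m+1 : ℕ) : ℤ) - 1 = (m:ℤ) by push_cast; ring, zpow_natCast]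
    have hfacpos : (0:ℝ) < (m.factorial : ℝ) := by exact_mod_cast m.factorial_pos
    have hS : Real.sqrt (m.factorial : ℝ) ≠ 0 := by positivity
    have hT : Real.sqrt ((m:ℝ)+1) ≠ 0 := by positivity
    have hT2 : Real.sqrt ((m:ℝ)+1) ^ 2 = (m:ℝ)+1 := Real.sq_sqrt (by positivity)
    have hfac : Real.sqrt (((m+1).factorial : ℝ))
        = Real.sqrt ((m:ℝ)+1) * Real.sqrt (m.factorial : ℝ) := by
      rw [Nat.factorial_succ]
      push_cast
      rw [Real.sqrt_mul (by positivity)]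
    rw [hz, hz2, hfac]
    field_simp
    linear_combination ((-γ)^m * y) * key
      + ((-γ)^m * y * charlier (γ^2) m (y^2-1)) * hT2
  have R0 : γ * p 1 y = y * p 0 y := by
    have h1 := hpodd 0 y
    have h0 := hpeven 0 y
    norm_num [charlier_zero'] at h1 h0
    rw [h1, h0]
    field_simp
  intro n
  obtain ⟨m, rfl | rfl⟩ := Nat.even_or_odd' n
  · rcases m with _ | m
    · -- n = 0
      norm_num
      rw [hu 1, hu 0]
      have hc := hc0 0
      norm_num at hc
      rw [hc]
      have hRC : (γ:ℂ) * ((p 1 y : ℝ) : ℂ) = (y:ℂ) * ((p 0 y : ℝ) : ℂ) := by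
        have := congrArg (Complex.ofReal) R0
        push_cast at this
        exact this
      linear_combination hRC - (γ:ℂ) * ((p 1 y : ℝ) : ℂ) * Complex.I_sq
    · -- n = 2*(m+1)
      rw [if_neg (show ¬(2*(m+1) = 0) by omega)]
      rw [show 2*(m+1) - 1 = 2*m+1 from by omega,
        show 2*(m+1) + 1 = 2*m+3 from by omega,
        show 2*(m+1) = 2*m+2 from by omega]
      rw [hc1 m, show (2*m+2 : ℕ) = 2*(m+1) from by omega, hc0 (m+1),
        show (2*(m+1) : ℕ) = 2*m+2 from by omega]
      rw [hu (2*m+1), hu (2*m+3), hu (2*m+2)]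
      have hRC : ((Real.sqrt ((m:ℝ)+1) : ℝ) : ℂ) * ((p (2*m+1) y : ℝ) : ℂ)
          + (γ:ℂ) * ((p (2*m+3) y : ℝ) : ℂ) = (y:ℂ) * ((p (2*m+2) y : ℝ) : ℂ) := by
        have := congrArg (Complex.ofReal) (Rodd m)
        push_cast at this
        exact this
      linear_combination (Complex.I^(2*m+2)) * hRC
        - (γ:ℂ) * ((p (2*m+3) y : ℝ) : ℂ) * Complex.I^(2*m+2) * Complex.I_sq
  · -- n = 2*m+1
    rw [if_neg (show ¬(2*m+1 = 0) by omega)]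
    rw [show 2*m+1 - 1 = 2*m from by omega, show 2*m+1 + 1 = 2*m+2 from by omega]
    rw [hc0 m, hc1 m]
    rw [hu (2*m), hu (2*m+2), hu (2*m+1)]
    have hRC : (γ:ℂ) * ((p (2*m) y : ℝ) : ℂ)
        + ((Real.sqrt ((m:ℝ)+1) : ℝ) : ℂ) * ((p (2*m+2) y : ℝ) : ℂ)
        = (y:ℂ) * ((p (2*m+1) y : ℝ) : ℂ) := by
      have := congrArg (Complex.ofReal) (Reven m)
      push_cast at this
      exact this
    linear_combination (Complex.I^(2*m+1)) * hRC
      - ((Real.sqrt ((m:ℝ)+1) : ℝ) : ℂ) * ((p (2*m+2) y : ℝ) : ℂ)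
        * Complex.I^(2*m+1) * Complex.I_sq
end

section
/- For every nonzero real number a, all nonnegative integers x and y, and every real number t with t ≠ a, the bilinear generating function identity holds: Σ_{m=0}^{∞} (t^m/m!)·C_m(x; a)·C_m(y; a) = e^{t}·(1 − t/a)^{x+y}·Σ_{k=0}^{min(x,y)} (x choose k)·(y choose k)·k!·( t/(a−t)² )^{k}, the infinite series converging absolutely. -/
open Finset

private lemma prod_range_cast_sub (x k : ℕ) :
    ∏ j ∈ Finset.range k, ((x : ℝ) - (j : ℝ)) = (x.descFactorial k : ℝ) := by
  induction k with
  | zero => simp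
  | succ k ih =>
    rw [Finset.prod_range_succ, ih, Nat.descFactorial_succ, Nat.cast_mul]
    by_cases h : k ≤ x
    · rw [Nat.cast_sub h]; ring
    · rw [Nat.descFactorial_eq_zero_iff_lt.2 (by omega)]
      simp

private lemma choose_descFactorial_comm (m x k : ℕ) :
    m.choose k * x.descFactorial k = x.choose k * m.descFactorial k := by
  rw [Nat.descFactorial_eq_factorial_mul_choose, Nat.descFactorial_eq_factorial_mul_choose]
  ring

private lemma charlier_nat (a : ℝ) (m x : ℕ) :
    charlier a m (x : ℝ)
      = ∑ i ∈ Finset.range (x + 1),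
          (x.choose i : ℝ) * (m.descFactorial i : ℝ) * (-1 / a) ^ i := by
  unfold charlier
  simp only [prod_range_cast_sub]
  have hL : ∑ k ∈ Finset.range (m + 1),
        (m.choose k : ℝ) * (x.descFactorial k : ℝ) * (-1 / a) ^ k
      = ∑ k ∈ Finset.range (m + x + 1),
        (m.choose k : ℝ) * (x.descFactorial k : ℝ) * (-1 / a) ^ k :=
    Finset.sum_subset (Finset.range_subset_range.2 (by omega)) (fun k _ hk => by
      rw [Nat.choose_eq_zero_of_lt (by simp only [Finset.mem_range] at hk; omega)]
      simp)
  have hR : ∑ i ∈ Finset.range (x + 1),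
        (x.choose i : ℝ) * (m.descFactorial i : ℝ) * (-1 / a) ^ i
      = ∑ i ∈ Finset.range (m + x + 1),
        (x.choose i : ℝ) * (m.descFactorial i : ℝ) * (-1 / a) ^ i :=
    Finset.sum_subset (Finset.range_subset_range.2 (by omega)) (fun k _ hk => by
      rw [Nat.choose_eq_zero_of_lt (by simp only [Finset.mem_range] at hk; omega)]
      simp)
  rw [hL, hR]
  refine Finset.sum_congr rfl fun k _ => ?_
  have := choose_descFactorial_comm m x k
  have h2 : (m.choose k : ℝ) * (x.descFactorial k : ℝ)
      = (x.choose k : ℝ) * (m.descFactorial k : ℝ) := by exact_mod_cast this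
  rw [h2]

private lemma descFactorial_add_eq (n j i : ℕ) :
    (n + j).descFactorial i
      = ∑ k ∈ Finset.range (i + 1),
          i.choose k * j.descFactorial k * n.descFactorial (i - k) := by
  rw [Nat.descFactorial_eq_factorial_mul_choose, Nat.add_comm n j, Nat.add_choose_eq,
    Finset.Nat.sum_antidiagonal_eq_sum_range_succ_mk, Finset.mul_sum]
  refine Finset.sum_congr rfl fun k hk => ?_
  have hk' : k ≤ i := by simp only [Finset.mem_range] at hk; omega
  rw [Nat.descFactorial_eq_factorial_mul_choose, Nat.descFactorial_eq_factorial_mul_choose,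
    ← Nat.choose_mul_factorial_mul_factorial hk']
  ring

private lemma exp_tsum (t : ℝ) : ∑' n : ℕ, t ^ n / (n.factorial : ℝ) = Real.exp t := by
  rw [Real.exp_eq_exp_ℝ, NormedSpace.exp_eq_tsum_div]

private lemma summable_desc (t : ℝ) (r : ℕ) :
    Summable (fun m : ℕ => t ^ m / (m.factorial : ℝ) * (m.descFactorial r : ℝ)) ∧
    ∑' m : ℕ, t ^ m / (m.factorial : ℝ) * (m.descFactorial r : ℝ) = t ^ r * Real.exp t := by
  set f : ℕ → ℝ := fun m => t ^ m / (m.factorial : ℝ) * (m.descFactorial r : ℝ) with hfdef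
  have key : ∀ n : ℕ, f (n + r) = t ^ r * (t ^ n / (n.factorial : ℝ)) := by
    intro n
    have h1 : ((n + r).factorial : ℝ)
        = (n.factorial : ℝ) * ((n + r).descFactorial r : ℝ) := by
      have := Nat.factorial_mul_descFactorial (show r ≤ n + r by omega)
      rw [show n + r - r = n by omega] at this
      exact_mod_cast this.symm
    have h2 : ((n + r).descFactorial r : ℝ) ≠ 0 :=
      Nat.cast_ne_zero.2 (by rw [Ne, Nat.descFactorial_eq_zero_iff_lt]; omega)
    have h3 : (n.factorial : ℝ) ≠ 0 := Nat.cast_ne_zero.2 n.factorial_ne_zero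
    simp only [hfdef, h1, pow_add]
    field_simp
  have hsum' : Summable fun n => f (n + r) := by
    rw [funext key]
    exact (Real.summable_pow_div_factorial t).mul_left _
  have hsum : Summable f := (summable_nat_add_iff r).1 hsum'
  refine ⟨hsum, ?_⟩
  have h0 : ∀ i ∈ Finset.range r, f i = 0 := fun i hi => by
    simp only [hfdef]
    rw [Nat.descFactorial_eq_zero_iff_lt.2 (Finset.mem_range.1 hi)]
    simp
  rw [← Summable.sum_add_tsum_nat_add r hsum, Finset.sum_eq_zero h0, zero_add]
  calc ∑' n : ℕ, f (n + r) = ∑' n : ℕ, t ^ r * (t ^ n / (n.factorial : ℝ)) := tsum_congr key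
    _ = t ^ r * Real.exp t := by rw [tsum_mul_left, exp_tsum]

private lemma summable_desc2 (t : ℝ) (i j : ℕ) :
    Summable (fun m : ℕ =>
      t ^ m / (m.factorial : ℝ) * (m.descFactorial i : ℝ) * (m.descFactorial j : ℝ)) ∧
    ∑' m : ℕ, t ^ m / (m.factorial : ℝ) * (m.descFactorial i : ℝ) * (m.descFactorial j : ℝ)
      = Real.exp t * ∑ k ∈ Finset.range (i + 1),
          (i.choose k : ℝ) * (j.descFactorial k : ℝ) * t ^ (j + (i - k)) := by
  set h : ℕ → ℝ := fun m =>
    t ^ m / (m.factorial : ℝ) * (m.descFactorial i : ℝ) * (m.descFactorial j : ℝ) with hhdef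
  have key : ∀ n : ℕ, h (n + j)
      = ∑ k ∈ Finset.range (i + 1),
          ((i.choose k : ℝ) * (j.descFactorial k : ℝ) * t ^ j)
            * (t ^ n / (n.factorial : ℝ) * (n.descFactorial (i - k) : ℝ)) := by
    intro n
    have h1 : ((n + j).factorial : ℝ)
        = (n.factorial : ℝ) * ((n + j).descFactorial j : ℝ) := by
      have := Nat.factorial_mul_descFactorial (show j ≤ n + j by omega)
      rw [show n + j - j = n by omega] at this
      exact_mod_cast this.symm
    have h2 : ((n + j).descFactorial j : ℝ) ≠ 0 :=
      Nat.cast_ne_zero.2 (by rw [Ne, Nat.descFactorial_eq_zero_iff_lt]; omega)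
    have h3 : (n.factorial : ℝ) ≠ 0 := Nat.cast_ne_zero.2 n.factorial_ne_zero
    have h4 : ((n + j).descFactorial i : ℝ)
        = ∑ k ∈ Finset.range (i + 1),
            (i.choose k : ℝ) * (j.descFactorial k : ℝ) * (n.descFactorial (i - k) : ℝ) := by
      rw [descFactorial_add_eq n j i]
      push_cast
      rfl
    have hstep : h (n + j)
        = t ^ j * (t ^ n / (n.factorial : ℝ)) * ((n + j).descFactorial i : ℝ) := by
      simp only [hhdef, h1, pow_add]
      field_simp
    rw [hstep, h4, Finset.mul_sum]
    exact Finset.sum_congr rfl fun k _ => by ring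
  have hsum' : Summable fun n => h (n + j) := by
    rw [funext key]
    exact summable_sum fun k _ => ((summable_desc t (i - k)).1).mul_left _
  have hsum : Summable h := (summable_nat_add_iff j).1 hsum'
  refine ⟨hsum, ?_⟩
  have h0 : ∀ m ∈ Finset.range j, h m = 0 := fun m hm => by
    simp only [hhdef]
    rw [Nat.descFactorial_eq_zero_iff_lt.2 (Finset.mem_range.1 hm)]
    simp
  rw [← Summable.sum_add_tsum_nat_add j hsum, Finset.sum_eq_zero h0, zero_add]
  calc ∑' n : ℕ, h (n + j)
      = ∑' n : ℕ, ∑ k ∈ Finset.range (i + 1),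
          ((i.choose k : ℝ) * (j.descFactorial k : ℝ) * t ^ j)
            * (t ^ n / (n.factorial : ℝ) * (n.descFactorial (i - k) : ℝ)) := tsum_congr key
    _ = ∑ k ∈ Finset.range (i + 1), ∑' n : ℕ,
          ((i.choose k : ℝ) * (j.descFactorial k : ℝ) * t ^ j)
            * (t ^ n / (n.factorial : ℝ) * (n.descFactorial (i - k) : ℝ)) :=
        Summable.tsum_finsetSum fun k _ => ((summable_desc t (i - k)).1).mul_left _
    _ = Real.exp t * ∑ k ∈ Finset.range (i + 1),
          (i.choose k : ℝ) * (j.descFactorial k : ℝ) * t ^ (j + (i - k)) := by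
        rw [Finset.mul_sum]
        refine Finset.sum_congr rfl fun k _ => ?_
        rw [tsum_mul_left, (summable_desc t (i - k)).2, pow_add]
        ring

private noncomputable def Ffun (a t : ℝ) (k x : ℕ) : ℝ :=
  ∑ i ∈ Finset.range (x + 1),
    (x.choose i : ℝ) * (i.choose k : ℝ) * (-1 / a) ^ i * t ^ (i - k)

private lemma Ffun_zero (a t : ℝ) {k x : ℕ} (hk : x < k) : Ffun a t k x = 0 :=
  Finset.sum_eq_zero fun i hi => by
    rw [Nat.choose_eq_zero_of_lt (show i < k by simp only [Finset.mem_range] at hi; omega)]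
    simp

private lemma Ffun_eq (a t : ℝ) {k x : ℕ} (hk : k ≤ x) :
    Ffun a t k x = (x.choose k : ℝ) * (-1 / a) ^ k * (1 - t / a) ^ (x - k) := by
  have h1 : Ffun a t k x = ∑ i ∈ Finset.Ico k (x + 1),
      (x.choose i : ℝ) * (i.choose k : ℝ) * (-1 / a) ^ i * t ^ (i - k) := by
    unfold Ffun
    rw [Finset.range_eq_Ico]
    exact (Finset.sum_subset (Finset.Ico_subset_Ico (Nat.zero_le k) le_rfl)
      (fun i hi hni => by
        have hik : i < k := by
          by_contra hcon
          exact hni (Finset.mem_Ico.mpr ⟨by omega, (Finset.mem_Ico.mp hi).2⟩)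
        rw [Nat.choose_eq_zero_of_lt hik]; simp)).symm
  rw [h1, Finset.sum_Ico_eq_sum_range, show x + 1 - k = x - k + 1 by omega]
  have hbin : (1 - t / a) ^ (x - k) = ∑ p ∈ Finset.range (x - k + 1),
      ((x - k).choose p : ℝ) * ((-1 / a) ^ p * t ^ p) := by
    have hb := add_pow (-(t / a)) 1 (x - k)
    simp only [one_pow, mul_one] at hb
    rw [show (1 : ℝ) - t / a = -(t / a) + 1 by ring, hb]
    refine Finset.sum_congr rfl fun p _ => ?_
    rw [show (-(t / a)) = -1 / a * t by ring, mul_pow]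
    ring
  rw [hbin, Finset.mul_sum]
  refine Finset.sum_congr rfl fun i hi => ?_
  have hix : k + i ≤ x := by simp only [Finset.mem_range] at hi; omega
  have hcm : (x.choose (k + i) : ℝ) * ((k + i).choose k : ℝ)
      = (x.choose k : ℝ) * ((x - k).choose i : ℝ) := by
    have := Nat.choose_mul (n := x) (Nat.le_add_right k i)
    rw [show k + i - k = i by omega] at this
    exact_mod_cast this
  rw [show k + i - k = i by omega, hcm, pow_add]
  ring

private lemma finite_id (a : ℝ) (ha : a ≠ 0) (x y : ℕ) (t : ℝ) (hta : t ≠ a) :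
    ∑ i ∈ Finset.range (x + 1), ∑ j ∈ Finset.range (y + 1),
      ((x.choose i : ℝ) * (-1 / a) ^ i * ((y.choose j : ℝ) * (-1 / a) ^ j))
        * (Real.exp t * ∑ k ∈ Finset.range (i + 1),
            (i.choose k : ℝ) * (j.descFactorial k : ℝ) * t ^ (j + (i - k)))
      = Real.exp t * (1 - t / a) ^ (x + y) *
          ∑ k ∈ Finset.range (min x y + 1),
            (x.choose k : ℝ) * (y.choose k : ℝ) * (k.factorial : ℝ) *
              (t / (a - t) ^ 2) ^ k := by
  have hat : a - t ≠ 0 := sub_ne_zero.2 (Ne.symm hta)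
  have hA : ∀ i ∈ Finset.range (x + 1), ∀ j ∈ Finset.range (y + 1),
      ((x.choose i : ℝ) * (-1 / a) ^ i * ((y.choose j : ℝ) * (-1 / a) ^ j))
        * (Real.exp t * ∑ k ∈ Finset.range (i + 1),
            (i.choose k : ℝ) * (j.descFactorial k : ℝ) * t ^ (j + (i - k)))
      = ∑ k ∈ Finset.range (x + 1),
          ((x.choose i : ℝ) * (i.choose k : ℝ) * (-1 / a) ^ i * t ^ (i - k) * Real.exp t)
            * ((y.choose j : ℝ) * (-1 / a) ^ j * (j.descFactorial k : ℝ) * t ^ j) := by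
    intro i hi j _
    have hix : i + 1 ≤ x + 1 := by simp only [Finset.mem_range] at hi; omega
    have hext : ∑ k ∈ Finset.range (i + 1),
          (i.choose k : ℝ) * (j.descFactorial k : ℝ) * t ^ (j + (i - k))
        = ∑ k ∈ Finset.range (x + 1),
          (i.choose k : ℝ) * (j.descFactorial k : ℝ) * t ^ (j + (i - k)) :=
      Finset.sum_subset (Finset.range_subset_range.2 hix) (fun k _ hk => by
        rw [Nat.choose_eq_zero_of_lt
          (show i < k by simp only [Finset.mem_range] at hk; omega)]
        simp)
    rw [hext, Finset.mul_sum, Finset.mul_sum]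
    refine Finset.sum_congr rfl fun k _ => ?_
    rw [pow_add]
    ring
  rw [Finset.sum_congr rfl fun i hi => Finset.sum_congr rfl fun j hj => hA i hi j hj,
    Finset.sum_congr rfl fun i (_ : i ∈ Finset.range (x + 1)) =>
      Finset.sum_comm (s := Finset.range (y + 1)) (t := Finset.range (x + 1)),
    Finset.sum_comm]
  -- now the left side is `∑ k ∈ range (x+1), ∑ i ∈ range (x+1), ∑ j ∈ range (y+1), ...`
  have step2 : ∀ k, ∑ i ∈ Finset.range (x + 1), ∑ j ∈ Finset.range (y + 1),
      ((x.choose i : ℝ) * (i.choose k : ℝ) * (-1 / a) ^ i * t ^ (i - k) * Real.exp t)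
        * ((y.choose j : ℝ) * (-1 / a) ^ j * (j.descFactorial k : ℝ) * t ^ j)
      = Real.exp t * (k.factorial : ℝ) * t ^ k * (Ffun a t k x * Ffun a t k y) := by
    intro k
    have hG : ∑ j ∈ Finset.range (y + 1),
        (y.choose j : ℝ) * (-1 / a) ^ j * (j.descFactorial k : ℝ) * t ^ j
        = (k.factorial : ℝ) * t ^ k * Ffun a t k y := by
      unfold Ffun
      rw [Finset.mul_sum]
      refine Finset.sum_congr rfl fun j _ => ?_
      by_cases hjk : k ≤ j
      · have hd : (j.descFactorial k : ℝ) = (k.factorial : ℝ) * (j.choose k : ℝ) := by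
          exact_mod_cast Nat.descFactorial_eq_factorial_mul_choose j k
        rw [hd, show t ^ j = t ^ (j - k) * t ^ k by rw [← pow_add]; congr 1; omega]
        ring
      · rw [Nat.choose_eq_zero_of_lt (show j < k by omega),
          Nat.descFactorial_eq_zero_iff_lt.2 (show j < k by omega)]
        simp
    calc ∑ i ∈ Finset.range (x + 1), ∑ j ∈ Finset.range (y + 1),
        ((x.choose i : ℝ) * (i.choose k : ℝ) * (-1 / a) ^ i * t ^ (i - k) * Real.exp t)
          * ((y.choose j : ℝ) * (-1 / a) ^ j * (j.descFactorial k : ℝ) * t ^ j)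
        = (∑ i ∈ Finset.range (x + 1),
            (x.choose i : ℝ) * (i.choose k : ℝ) * (-1 / a) ^ i * t ^ (i - k) * Real.exp t)
          * ∑ j ∈ Finset.range (y + 1),
            (y.choose j : ℝ) * (-1 / a) ^ j * (j.descFactorial k : ℝ) * t ^ j := by
          rw [Finset.sum_mul]
          exact Finset.sum_congr rfl fun i _ => by rw [Finset.mul_sum]
      _ = Real.exp t * (k.factorial : ℝ) * t ^ k * (Ffun a t k x * Ffun a t k y) := by
          rw [hG, ← Finset.sum_mul]
          unfold Ffun
          ring
  rw [Finset.sum_congr rfl fun k _ => step2 k]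
  -- rewrite the right side as a sum over `range (x+1)` and match termwise
  rw [Finset.mul_sum]
  have hmin : min x y + 1 ≤ x + 1 := by omega
  rw [show ∑ k ∈ Finset.range (min x y + 1),
        Real.exp t * (1 - t / a) ^ (x + y) *
          ((x.choose k : ℝ) * (y.choose k : ℝ) * (k.factorial : ℝ) * (t / (a - t) ^ 2) ^ k)
      = ∑ k ∈ Finset.range (x + 1),
        Real.exp t * (1 - t / a) ^ (x + y) *
          ((x.choose k : ℝ) * (y.choose k : ℝ) * (k.factorial : ℝ) * (t / (a - t) ^ 2) ^ k)
      from Finset.sum_subset (Finset.range_subset_range.2 hmin) (fun k hk hnk => by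
        have hky : y < k := by simp only [Finset.mem_range] at hk hnk; omega
        rw [Nat.choose_eq_zero_of_lt hky]
        simp)]
  refine Finset.sum_congr rfl fun k hk => ?_
  have hkx : k ≤ x := by simp only [Finset.mem_range] at hk; omega
  by_cases hky : k ≤ y
  · rw [Ffun_eq a t hkx, Ffun_eq a t hky]
    have hxy : x + y = (x - k) + ((y - k) + (k + k)) := by omega
    have key : t ^ k * ((-1 / a) ^ k * (-1 / a) ^ k)
        = (1 - t / a) ^ k * (1 - t / a) ^ k * (t / (a - t) ^ 2) ^ k := by
      rw [← mul_pow, ← mul_pow, ← mul_pow, ← mul_pow]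
      congr 1
      field_simp
    rw [hxy, pow_add, pow_add, pow_add]
    linear_combination (Real.exp t * (k.factorial : ℝ) * (x.choose k : ℝ) * (y.choose k : ℝ)
      * (1 - t / a) ^ (x - k) * (1 - t / a) ^ (y - k)) * key
  · rw [Ffun_zero a t (show y < k by omega), Nat.choose_eq_zero_of_lt (show y < k by omega)]
    simp

/-- Bilinear generating function for Charlier polynomials: for `a ≠ 0`, nonnegative
integers `x, y` and real `t ≠ a`,
`∑_{m=0}^{∞} (t^m/m!)·C_m(x;a)·C_m(y;a)
  = e^t·(1-t/a)^{x+y}·∑_{k=0}^{min(x,y)} (x choose k)(y choose k)·k!·(t/(a-t)²)^k`,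
the infinite series converging absolutely. -/
theorem charlier_bilinear_generating_function (a : ℝ) (ha : a ≠ 0)
    (x y : ℕ) (t : ℝ) (hta : t ≠ a) :
    Summable (fun m : ℕ =>
      |t ^ m / (m.factorial : ℝ) * charlier a m (x : ℝ) * charlier a m (y : ℝ)|) ∧
    ∑' m : ℕ, t ^ m / (m.factorial : ℝ) * charlier a m (x : ℝ) * charlier a m (y : ℝ) =
      Real.exp t * (1 - t / a) ^ (x + y) *
        ∑ k ∈ Finset.range (min x y + 1),
          (x.choose k : ℝ) * (y.choose k : ℝ) * (k.factorial : ℝ) *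
            (t / (a - t) ^ 2) ^ k := by
  have hf : ∀ m : ℕ, t ^ m / (m.factorial : ℝ) * charlier a m (x : ℝ) * charlier a m (y : ℝ)
      = ∑ i ∈ Finset.range (x + 1), ∑ j ∈ Finset.range (y + 1),
          ((x.choose i : ℝ) * (-1 / a) ^ i * ((y.choose j : ℝ) * (-1 / a) ^ j))
            * (t ^ m / (m.factorial : ℝ) * (m.descFactorial i : ℝ) * (m.descFactorial j : ℝ)) := by
    intro m
    rw [charlier_nat a m x, charlier_nat a m y]
    simp only [Finset.mul_sum, Finset.sum_mul]
    rw [Finset.sum_comm]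
    refine Finset.sum_congr rfl fun i _ => Finset.sum_congr rfl fun j _ => by ring
  have hsf : Summable (fun m : ℕ =>
      t ^ m / (m.factorial : ℝ) * charlier a m (x : ℝ) * charlier a m (y : ℝ)) := by
    rw [funext hf]
    exact summable_sum fun i _ => summable_sum fun j _ =>
      ((summable_desc2 t i j).1).mul_left _
  refine ⟨hsf.abs, ?_⟩
  calc ∑' m : ℕ, t ^ m / (m.factorial : ℝ) * charlier a m (x : ℝ) * charlier a m (y : ℝ)
      = ∑' m : ℕ, ∑ i ∈ Finset.range (x + 1), ∑ j ∈ Finset.range (y + 1),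
          ((x.choose i : ℝ) * (-1 / a) ^ i * ((y.choose j : ℝ) * (-1 / a) ^ j))
            * (t ^ m / (m.factorial : ℝ) * (m.descFactorial i : ℝ) * (m.descFactorial j : ℝ)) :=
        tsum_congr hf
    _ = ∑ i ∈ Finset.range (x + 1), ∑' m : ℕ, ∑ j ∈ Finset.range (y + 1),
          ((x.choose i : ℝ) * (-1 / a) ^ i * ((y.choose j : ℝ) * (-1 / a) ^ j))
            * (t ^ m / (m.factorial : ℝ) * (m.descFactorial i : ℝ) * (m.descFactorial j : ℝ)) :=
        Summable.tsum_finsetSum fun i _ => summable_sum fun j _ => ((summable_desc2 t i j).1).mul_left _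
    _ = ∑ i ∈ Finset.range (x + 1), ∑ j ∈ Finset.range (y + 1), ∑' m : ℕ,
          ((x.choose i : ℝ) * (-1 / a) ^ i * ((y.choose j : ℝ) * (-1 / a) ^ j))
            * (t ^ m / (m.factorial : ℝ) * (m.descFactorial i : ℝ) * (m.descFactorial j : ℝ)) :=
        Finset.sum_congr rfl fun i _ =>
          Summable.tsum_finsetSum fun j _ => ((summable_desc2 t i j).1).mul_left _
    _ = ∑ i ∈ Finset.range (x + 1), ∑ j ∈ Finset.range (y + 1),
          ((x.choose i : ℝ) * (-1 / a) ^ i * ((y.choose j : ℝ) * (-1 / a) ^ j))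
            * (Real.exp t * ∑ k ∈ Finset.range (i + 1),
                (i.choose k : ℝ) * (j.descFactorial k : ℝ) * t ^ (j + (i - k))) := by
        refine Finset.sum_congr rfl fun i _ => Finset.sum_congr rfl fun j _ => ?_
        rw [tsum_mul_left, (summable_desc2 t i j).2]
    _ = Real.exp t * (1 - t / a) ^ (x + y) *
          ∑ k ∈ Finset.range (min x y + 1),
            (x.choose k : ℝ) * (y.choose k : ℝ) * (k.factorial : ℝ) *
              (t / (a - t) ^ 2) ^ k := finite_id a ha x y t hta
end
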